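/- Let T, L, P > 0, n ∈ ℕ with n ≥ 1, and suppose (h,t,ρ) is a discretization of length n such that: each h_j equals 2^{−ℓ_j} T for some ℓ_j ∈ ℕ; ρ_j = 2LP h_j² for all j ∈ [1,n]; each t_j equals i_j h_j for some i_j ∈ ℕ (with the convention that this holds trivially for j = 0); and t = Σ₊h. Then for every k ∈ [0,n], the refined discretization ψ[h,t,ρ;k] again satisfies all four properties (with the node ρ_0 component of ψ[h,t,ρ;0] exempt from the coupling condition, which only concerns indices j ≥ 1). -/
import Mathlib


noncomputable section

/-- The local error term `𝓔_j(h,t,ρ)` of the Euler scheme error bound: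
`𝓔_0 = e^{LT} ρ_0/2` and `𝓔_j = e^{L(T-t_j)}(e^{L h_j}-1)(P h_j + ρ_j/2 + ρ_j/(2 L h_j))`. -/
def calE (T L P : ℝ) (h t ρ : ℕ → ℝ) (j : ℕ) : ℝ :=
  if j = 0 then Real.exp (L * T) * ρ 0 / 2
  else Real.exp (L * (T - t j)) * (Real.exp (L * h j) - 1) *
    (P * h j + ρ j / 2 + ρ j / (2 * L * h j))

/-- The error bound `E(h,t,ρ) = ∑_{j=0}^n 𝓔_j(h,t,ρ)` for a discretization of length `n`. -/
def Ebound (T L P : ℝ) (n : ℕ) (h t ρ : ℕ → ℝ) : ℝ :=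
  ∑ j ∈ Finset.range (n + 1), calE T L P h t ρ j

/-- The `h`-component of the subdivision rule `ψ[h,t,ρ;k]`: for `k = 0` the step
sizes are unchanged, for `k ∈ [1,n]` the entry `h_k` is replaced by the two
entries `h_k/2, h_k/2` and later entries are shifted. -/
def psiH (h : ℕ → ℝ) (k : ℕ) : ℕ → ℝ := fun j =>
  if k = 0 then h j
  else if j < k then h j
  else if j ≤ k + 1 then h k / 2
  else h (j - 1)

/-- The `t`-component of the subdivision rule `ψ[h,t,ρ;k]`: for `k = 0` the nodes
are unchanged, for `k ∈ [1,n]` the node `t_k - h_k/2` is inserted between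
`t_{k-1}` and `t_k`. -/
def psiT (h t : ℕ → ℝ) (k : ℕ) : ℕ → ℝ := fun j =>
  if k = 0 then t j
  else if j < k then t j
  else if j = k then t k - h k / 2
  else t (j - 1)

/-- The `ρ`-component of the subdivision rule `ψ[h,t,ρ;k]`: for `k = 0` the entry
`ρ_0` is replaced by `ρ_0/4`, for `k ∈ [1,n]` the entry `ρ_k` is replaced by the
two entries `ρ_k/4, ρ_k/4` and later entries are shifted. -/
def psiRho (ρ : ℕ → ℝ) (k : ℕ) : ℕ → ℝ := fun j =>
  if k = 0 then (if j = 0 then ρ 0 / 4 else ρ j)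
  else if j < k then ρ j
  else if j ≤ k + 1 then ρ k / 4
  else ρ (j - 1)

/-- The length of the discretization produced by `ψ[h,t,ρ;k]` from one of length `n`:
`n` if `k = 0`, and `n + 1` otherwise. -/
def newn (n k : ℕ) : ℕ := if k = 0 then n else n + 1

/-- `ΔE(h,t,ρ;k) = E(ψ[h,t,ρ;k]) - E(h,t,ρ)`. -/
def deltaE (T L P : ℝ) (n : ℕ) (h t ρ : ℕ → ℝ) (k : ℕ) : ℝ :=
  Ebound T L P (newn n k) (psiH h k) (psiT h t k) (psiRho ρ k) - Ebound T L P n h t ρ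

/-- The cost estimator `C(h,t,ρ) = ∑_{j=0}^{n-1} (v_R(t_j)/ρ_j^{d_R}) ·
(v_F(t_j) h_{j+1}^{d_F} / ρ_{j+1}^{d_F})`. -/
def costC (dR dF : ℕ) (vR vF : ℝ → ℝ) (n : ℕ) (h t ρ : ℕ → ℝ) : ℝ :=
  ∑ j ∈ Finset.range n,
    (vR (t j) / ρ j ^ dR) * (vF (t j) * h (j + 1) ^ dF / ρ (j + 1) ^ dF)

/-- `ΔC(h,t,ρ;k) = C(ψ[h,t,ρ;k]) - C(h,t,ρ)`. -/
def deltaC (dR dF : ℕ) (vR vF : ℝ → ℝ) (n : ℕ) (h t ρ : ℕ → ℝ) (k : ℕ) : ℝ :=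
  costC dR dF vR vF (newn n k) (psiH h k) (psiT h t k) (psiRho ρ k) -
    costC dR dF vR vF n h t ρ

theorem stmt_9 (T L P : ℝ) (hT : 0 < T) (hL : 0 < L) (hP : 0 < P)
    (n : ℕ) (hn : 1 ≤ n) (h t ρ : ℕ → ℝ)
    (hh : ∀ j, 1 ≤ j → j ≤ n → 0 < h j)
    (htnn : ∀ j, j ≤ n → 0 ≤ t j)
    (hρ : ∀ j, j ≤ n → 0 < ρ j)
    (hdyadic : ∀ j, 1 ≤ j → j ≤ n → ∃ ℓ : ℕ, h j = T / 2 ^ ℓ)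
    (hcoup : ∀ j, 1 ≤ j → j ≤ n → ρ j = 2 * L * P * (h j) ^ 2)
    (hnode : ∀ j, j ≤ n → ∃ i : ℕ, t j = (i : ℝ) * h j)
    (hcum : ∀ k, k ≤ n → t k = ∑ j ∈ Finset.Icc 1 k, h j) :
    ∀ k, k ≤ n →
      (∀ j, 1 ≤ j → j ≤ newn n k → ∃ ℓ : ℕ, psiH h k j = T / 2 ^ ℓ) ∧
      (∀ j, 1 ≤ j → j ≤ newn n k → psiRho ρ k j = 2 * L * P * (psiH h k j) ^ 2) ∧
      (∀ j, j ≤ newn n k → ∃ i : ℕ, psiT h t k j = (i : ℝ) * psiH h k j) ∧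
      (∀ j, j ≤ newn n k → psiT h t k j = ∑ i ∈ Finset.Icc 1 j, psiH h k i) := by
  intro k hk
  by_cases hk0 : k = 0
  · subst hk0
    refine ⟨?_, ?_, ?_, ?_⟩
    · intro j h1 h2
      simpa [psiH] using hdyadic j h1 (by simpa [newn] using h2)
    · intro j h1 h2
      have hj0 : j ≠ 0 := by omega
      simp only [psiH, psiRho, if_pos rfl, if_neg hj0]
      exact hcoup j h1 (by simpa [newn] using h2)
    · intro j h2
      simpa [psiT, psiH] using hnode j (by simpa [newn] using h2)
    · intro j h2
      simpa [psiT, psiH] using hcum j (by simpa [newn] using h2)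
  · have hk1 : 1 ≤ k := by omega
    have hnew : newn n k = n + 1 := by simp [newn, hk0]
    rw [hnew]
    have tstep : ∀ j, 1 ≤ j → j ≤ n → t j = t (j - 1) + h j := by
      intro j h1 hj
      obtain ⟨m, rfl⟩ : ∃ m, j = m + 1 := ⟨j - 1, by omega⟩
      simp only [Nat.add_sub_cancel]
      rw [hcum (m + 1) hj, hcum m (by omega),
        Finset.sum_Icc_succ_top (Nat.le_add_left 1 m)]
    refine ⟨?_, ?_, ?_, ?_⟩
    · intro j h1 h2
      rcases lt_trichotomy j k with hjk | hjk | hjk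
      · simpa [psiH, hk0, hjk] using hdyadic j h1 (by omega)
      · obtain ⟨ℓ, hℓ⟩ := hdyadic k hk1 hk
        refine ⟨ℓ + 1, ?_⟩
        simp only [psiH, if_neg hk0, if_neg (by omega : ¬ j < k),
          if_pos (by omega : j ≤ k + 1)]
        rw [hℓ, pow_succ]; ring
      · by_cases hj1 : j ≤ k + 1
        · obtain ⟨ℓ, hℓ⟩ := hdyadic k hk1 hk
          refine ⟨ℓ + 1, ?_⟩
          simp only [psiH, if_neg hk0, if_neg (by omega : ¬ j < k), if_pos hj1]
          rw [hℓ, pow_succ]; ring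
        · simp only [psiH, if_neg hk0, if_neg (by omega : ¬ j < k), if_neg hj1]
          exact hdyadic (j - 1) (by omega) (by omega)
    · intro j h1 h2
      by_cases hjk : j < k
      · simp only [psiRho, psiH, if_neg hk0, if_pos hjk]
        exact hcoup j h1 (by omega)
      · by_cases hj1 : j ≤ k + 1
        · simp only [psiRho, psiH, if_neg hk0, if_neg hjk, if_pos hj1]
          rw [hcoup k hk1 hk]; ring
        · simp only [psiRho, psiH, if_neg hk0, if_neg hjk, if_neg hj1]
          exact hcoup (j - 1) (by omega) (by omega)
    · intro j h2
      rcases lt_trichotomy j k with hjk | hjk | hjk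
      · simp only [psiT, psiH, if_neg hk0, if_pos hjk]
        exact hnode j (by omega)
      · subst hjk
        obtain ⟨i, hi⟩ := hnode j hk
        have htpos : 0 < t j := by
          rw [hcum j hk]
          exact Finset.sum_pos (fun x hx => hh x (Finset.mem_Icc.mp hx).1
            (le_trans (Finset.mem_Icc.mp hx).2 hk)) ⟨j, Finset.mem_Icc.mpr ⟨hk1, le_rfl⟩⟩
        have hi1 : 1 ≤ i := by
          by_contra hcon
          have : i = 0 := by omega
          rw [this] at hi; simp at hi; linarith
        refine ⟨2 * i - 1, ?_⟩
        simp only [psiT, psiH, if_neg hk0, if_neg (lt_irrefl j), if_pos rfl,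
          if_neg (by omega : ¬ j < j), if_pos (by omega : j ≤ j + 1), if_true]
        have : ((2 * i - 1 : ℕ) : ℝ) = 2 * (i : ℝ) - 1 := by
          push_cast [Nat.cast_sub (by omega : 1 ≤ 2 * i)]; ring
        rw [this, hi]; ring
      · obtain ⟨i, hi⟩ := hnode k hk
        by_cases hj1 : j ≤ k + 1
        · have hje : j = k + 1 := by omega
          subst hje
          refine ⟨2 * i, ?_⟩
          simp only [psiT, psiH, if_neg hk0, if_neg (by omega : ¬ k + 1 < k),
            if_neg (by omega : ¬ k + 1 = k), if_pos (le_refl (k + 1)),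
            Nat.add_sub_cancel, if_true]
          rw [hi]; push_cast; ring
        · simp only [psiT, psiH, if_neg hk0, if_neg (by omega : ¬ j < k),
            if_neg (by omega : ¬ j = k), if_neg hj1]
          exact hnode (j - 1) (by omega)
    · have step : ∀ j, 1 ≤ j → j ≤ n + 1 →
          psiT h t k j = psiT h t k (j - 1) + psiH h k j := by
        intro j h1 hj
        rcases lt_trichotomy j k with hjk | hjk | hjk
        · simp only [psiT, psiH, if_neg hk0, if_pos hjk, if_pos (by omega : j - 1 < k)]
          exact tstep j h1 (by omega)
        · subst hjk
          simp only [psiT, psiH, if_neg hk0, if_neg (lt_irrefl j), if_pos rfl,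
            if_pos (by omega : j - 1 < j), if_neg (by omega : ¬ j < j),
            if_pos (by omega : j ≤ j + 1), if_true]
          have := tstep j h1 (by omega)
          linarith
        · by_cases hj1 : j ≤ k + 1
          · have hje : j = k + 1 := by omega
            subst hje
            simp only [psiT, psiH, if_neg hk0, if_neg (by omega : ¬ k + 1 < k),
              if_neg (by omega : ¬ k + 1 = k), Nat.add_sub_cancel,
              if_neg (lt_irrefl k), if_pos rfl, if_pos hj1, if_true]
            ring
          · simp only [psiT, psiH, if_neg hk0, if_neg (by omega : ¬ j < k),
              if_neg (by omega : ¬ j = k), if_neg (by omega : ¬ j - 1 < k),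
              if_neg (by omega : ¬ j - 1 = k), if_neg hj1]
            exact tstep (j - 1) (by omega) (by omega)
      intro j
      induction j with
      | zero =>
        intro _
        have ht0 : t 0 = 0 := by simpa using hcum 0 (by omega)
        simp [psiT, if_neg hk0, if_pos (by omega : 0 < k), ht0]
      | succ m ih =>
        intro hm
        rw [Finset.sum_Icc_succ_top (Nat.le_add_left 1 m), ← ih (by omega)]
        have := step (m + 1) (by omega) hm
        simpa using this
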